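/- Let C be a nonempty finite set, w_c ∈ ℝ^p for c ∈ C with arithmetic mean w̄ := (1/|C|) ∑_c w_c, let A₀ be a symmetric negative definite p×p real matrix, and Φ_c ∈ ℝ^p residuals. For α ∈ ℝ define the modified residuals Φ̃_c := Φ_c + α • A₀ (w_c − w̄) and set D := ∑_c ⟨A₀ (w_c − w̄), w_c − w̄⟩. Then: (i) ∑_c Φ̃_c = ∑_c Φ_c (the modification preserves conservation); (ii) ∑_c ⟨w_c, Φ̃_c⟩ = ∑_c ⟨w_c, Φ_c⟩ + α D; (iii) if the w_c are not all equal then D < 0, and for any target value G ∈ ℝ, setting E := G − ∑_c ⟨w_c, Φ_c⟩, every α ≥ E/D yields the entropy stability inequality ∑_c ⟨w_c, Φ̃_c⟩ ≤ G. -/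

import Mathlib

open scoped RealInnerProductSpace

/-- **Entropy correction of residuals.**
The modification `Φ̃_c = Φ_c + α • A₀(w_c − w̄)`, with `A₀` symmetric negative
definite and `w̄` the arithmetic mean of the `w_c`, preserves the sum of the
residuals, shifts the entropy production by `α · D` with
`D = ∑ ⟨A₀(w_c − w̄), w_c − w̄⟩`, and, if the `w_c` are not all equal (so that
`D < 0`), any `α ≥ E/D` with `E = G − ∑⟨w_c, Φ_c⟩` enforces the entropy
stability inequality `∑ ⟨w_c, Φ̃_c⟩ ≤ G`. -/
theorem entropy_correction {p : ℕ} {C : Type*} [Fintype C] [Nonempty C]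
    (w : C → EuclideanSpace ℝ (Fin p))
    (A₀ : EuclideanSpace ℝ (Fin p) →ₗ[ℝ] EuclideanSpace ℝ (Fin p))
    (hsymm : ∀ x y, ⟪A₀ x, y⟫ = ⟪x, A₀ y⟫)
    (hneg : ∀ x, x ≠ 0 → ⟪A₀ x, x⟫ < 0)
    (Φ : C → EuclideanSpace ℝ (Fin p))
    (wbar : EuclideanSpace ℝ (Fin p))
    (hwbar : wbar = ((Fintype.card C : ℝ))⁻¹ • ∑ c, w c)
    (D : ℝ) (hD : D = ∑ c, ⟪A₀ (w c - wbar), w c - wbar⟫)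
    (Φt : ℝ → C → EuclideanSpace ℝ (Fin p))
    (hΦt : ∀ α c, Φt α c = Φ c + α • A₀ (w c - wbar)) :
    (∀ α, ∑ c, Φt α c = ∑ c, Φ c)
    ∧ (∀ α, ∑ c, ⟪w c, Φt α c⟫ = (∑ c, ⟪w c, Φ c⟫) + α * D)
    ∧ ((¬ ∀ c c', w c = w c') → D < 0 ∧
        ∀ G α : ℝ, α ≥ (G - ∑ c, ⟪w c, Φ c⟫) / D →
          ∑ c, ⟪w c, Φt α c⟫ ≤ G) := by
  have hcard : (Fintype.card C : ℝ) ≠ 0 := by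
    exact_mod_cast Fintype.card_ne_zero
  have hsum0 : ∑ c, (w c - wbar) = 0 := by
    rw [Finset.sum_sub_distrib, Finset.sum_const, hwbar, Finset.card_univ,
      ← Nat.cast_smul_eq_nsmul ℝ, smul_smul, mul_inv_cancel₀ hcard, one_smul, sub_self]
  have part1 : ∀ α, ∑ c, Φt α c = ∑ c, Φ c := by
    intro α
    simp only [hΦt, Finset.sum_add_distrib]
    rw [← Finset.smul_sum, ← map_sum, hsum0]
    simp
  have part2 : ∀ α, ∑ c, ⟪w c, Φt α c⟫ = (∑ c, ⟪w c, Φ c⟫) + α * D := by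
    intro α
    simp only [hΦt, inner_add_right]
    rw [Finset.sum_add_distrib]
    congr 1
    have : ∀ c : C, ⟪w c, α • A₀ (w c - wbar)⟫ =
        α * ⟪A₀ (w c - wbar), w c - wbar⟫ + α * ⟪wbar, A₀ (w c - wbar)⟫ := by
      intro c
      have hx : ⟪A₀ (w c - wbar), w c⟫ =
          ⟪A₀ (w c - wbar), w c - wbar⟫ + ⟪A₀ (w c - wbar), wbar⟫ := by
        rw [← inner_add_right]
        congr 1
        abel
      rw [real_inner_smul_right, real_inner_comm, hx,
        real_inner_comm (A₀ (w c - wbar)) wbar]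
      ring
    rw [Finset.sum_congr rfl fun c _ => this c, Finset.sum_add_distrib,
      ← Finset.mul_sum, ← Finset.mul_sum, ← hD]
    have : ∑ c, ⟪wbar, A₀ (w c - wbar)⟫ = 0 := by
      rw [← inner_sum, ← map_sum, hsum0, map_zero, inner_zero_right]
    rw [this, mul_zero, add_zero]
  refine ⟨part1, part2, fun hne => ?_⟩
  have hDneg : D < 0 := by
    have hle : ∀ c : C, ⟪A₀ (w c - wbar), w c - wbar⟫ ≤ 0 := by
      intro c
      by_cases h : w c - wbar = 0
      · simp [h]
      · exact (hneg _ h).le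
    obtain ⟨c, c', hcc⟩ : ∃ c c', w c ≠ w c' := by
      by_contra h; push_neg at h; exact hne h
    have hex : w c - wbar ≠ 0 ∨ w c' - wbar ≠ 0 := by
      by_contra h
      push_neg at h
      apply hcc
      have h1 := sub_eq_zero.mp h.1
      have h2 := sub_eq_zero.mp h.2
      rw [h1, h2]
    have : ∃ c₀, ⟪A₀ (w c₀ - wbar), w c₀ - wbar⟫ < 0 := by
      rcases hex with h | h
      · exact ⟨c, hneg _ h⟩
      · exact ⟨c', hneg _ h⟩
    obtain ⟨c₀, hc₀⟩ := this
    rw [hD]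
    calc ∑ c, ⟪A₀ (w c - wbar), w c - wbar⟫
        < ∑ c : C, (0 : ℝ) := by
          apply Finset.sum_lt_sum (fun i _ => hle i) ⟨c₀, Finset.mem_univ _, hc₀⟩
      _ = 0 := by simp
  refine ⟨hDneg, fun G α hα => ?_⟩
  rw [part2]
  have : α * D ≤ G - ∑ c, ⟪w c, Φ c⟫ := by
    rw [ge_iff_le, div_le_iff_of_neg hDneg] at hα
    linarith
  linarith
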